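/- For n ≥ 7, the unique root r₁(n) of f_n(x) = x^{2n-3} - x^{2n-4} - x^{n-2} + 1 in (1,2) satisfies r₁(n)^{n-1} > 3. -/

import Mathlib

/-- f_n(x) = x^{2n-3} - x^{2n-4} - x^{n-2} + 1. -/
noncomputable def f (n : ℕ) (x : ℝ) : ℝ :=
  x ^ (2 * n - 3) - x ^ (2 * n - 4) - x ^ (n - 2) + 1

lemma key_poly (y : ℝ) (h1 : 1 < y) (h2 : y ^ 2 ≤ 2 * y + 1) :
    y ^ 11 < (y ^ 2 + y - 1) ^ 5 := by
  set t := y - 1 with ht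
  have hty : y = 1 + t := by ring
  have ht0 : 0 < t := by simp [ht]; linarith
  have ht2 : t ^ 2 ≤ 2 := by nlinarith
  have step : t ^ 4 + 4 * t ^ 3 + t ^ 2 < 4 + 16 * t := by
    rcases le_or_gt t (1/4) with h | h
    · nlinarith [pow_pos ht0 2, pow_pos ht0 3, pow_pos ht0 4]
    · nlinarith [pow_pos ht0 2, mul_le_mul_of_nonneg_left ht2 (le_of_lt ht0),
        sq_nonneg (t^2 - 2)]
  have hid : (y ^ 2 + y - 1) ^ 5 - y ^ 11 =
      t * ((1 + t) ^ 6 * (4 + 16 * t - (t ^ 4 + 4 * t ^ 3 + t ^ 2))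
        + 10 * (1 + t) ^ 4 * t ^ 2 + 5 * (1 + t) ^ 2 * t ^ 3 + t ^ 4) := by
    rw [hty]; ring
  have hu : (0:ℝ) < 1 + t := by linarith
  nlinarith [pow_pos hu 6, pow_pos hu 4, pow_pos hu 2, pow_pos ht0 4, pow_pos ht0 3,
    pow_pos ht0 2, mul_pos (pow_pos hu 6) (sub_pos.mpr step),
    mul_pos (mul_pos (by norm_num : (0:ℝ) < 10) (pow_pos hu 4)) (pow_pos ht0 2),
    mul_pos (mul_pos (by norm_num : (0:ℝ) < 5) (pow_pos hu 2)) (pow_pos ht0 3)]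

/-- For n ≥ 7, the (unique) root r₁(n) of f_n in (1,2) satisfies r₁(n)^{n-1} > 3. -/
theorem stmt_6 (n : ℕ) (hn : 7 ≤ n) (r : ℝ) (hr : r ∈ Set.Ioo (1 : ℝ) 2)
    (hroot : f n r = 0) : 3 < r ^ (n - 1) := by
  obtain ⟨hr1, hr2⟩ := hr
  set m := n - 2 with hm
  have hm5 : 5 ≤ m := by omega
  set y := r ^ m with hy
  have hy1 : 1 < y := one_lt_pow₀ hr1 (by omega)
  have e2 : r ^ (2 * n - 4) = y ^ 2 := by
    rw [hy, ← pow_mul]; congr 1; omega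
  have e1 : r ^ (2 * n - 3) = r * y ^ 2 := by
    have : 2 * n - 3 = (2 * n - 4) + 1 := by omega
    rw [this, pow_succ, e2]; ring
  have e3 : r ^ (n - 2) = y := rfl
  have heq : r * y ^ 2 = y ^ 2 + y - 1 := by
    have := hroot
    unfold f at this
    rw [e1, e2, e3] at this
    linarith
  have e4 : r ^ (n - 1) = y * r := by
    have : n - 1 = m + 1 := by omega
    rw [this, pow_succ, hy]
  by_contra hcon
  push_neg at hcon
  rw [e4] at hcon
  -- y^2 ≤ 2y + 1
  have hyr : y ^ 2 ≤ 2 * y + 1 := by nlinarith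
  have hkey := key_poly y hy1 hyr
  -- (y^2+y-1)^5 = r^5 * y^10
  have h5 : (y ^ 2 + y - 1) ^ 5 = r ^ 5 * y ^ 10 := by
    rw [← heq]; ring
  rw [h5] at hkey
  have hy10 : (0:ℝ) < y ^ 10 := by positivity
  have hlt : y < r ^ 5 := by
    have := (mul_lt_mul_iff_of_pos_right hy10).mp (by calc y * y ^ 10 = y ^ 11 := by ring
      _ < r ^ 5 * y ^ 10 := hkey)
    exact this
  have hge : r ^ 5 ≤ r ^ m := pow_le_pow_right₀ (le_of_lt hr1) hm5
  rw [← hy] at hge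
  linarith
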